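/- arXiv:2108.10032 — 2 statements merged into one kernel-verified Lean document; each statement's English description precedes it below -/
import Mathlib

section
/- Let D = (D₁, D₂, D₃) ∈ ℝ³ be nonzero, and set a = 2D₁² + D₂² + D₃², b = D₁² + 2D₂² + D₃², c = D₁² + D₂² + 2D₃², g = 2D₁D₂, h = 2D₁D₃, i = 2D₂D₃, and m = 2D₁² + 2D₂² + D₃². Then the symmetric matrix H = [[2a, g, h], [g, 2b, i], [h, i, 2c]] has leading principal minors Δ₁ = 2a > 0, Δ₂ = 4m‖D‖² > 0, Δ₃ = det H = 16‖D‖⁶ > 0; in particular H is positive definite. -/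
open Matrix

/-- The Hessian of the squared torsion norm: its leading principal minors are
`2a`, `4m‖D‖²`, `16‖D‖⁶`, all positive, so it is positive definite. -/
theorem stmt13 (D₁ D₂ D₃ : ℝ) (hD : ¬(D₁ = 0 ∧ D₂ = 0 ∧ D₃ = 0))
    (a b c g h i m nsq : ℝ)
    (ha : a = 2 * D₁ ^ 2 + D₂ ^ 2 + D₃ ^ 2)
    (hb : b = D₁ ^ 2 + 2 * D₂ ^ 2 + D₃ ^ 2)
    (hc : c = D₁ ^ 2 + D₂ ^ 2 + 2 * D₃ ^ 2)
    (hg : g = 2 * D₁ * D₂) (hh : h = 2 * D₁ * D₃) (hi : i = 2 * D₂ * D₃)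
    (hm : m = 2 * D₁ ^ 2 + 2 * D₂ ^ 2 + D₃ ^ 2)
    (hn : nsq = D₁ ^ 2 + D₂ ^ 2 + D₃ ^ 2) :
    2 * a > 0 ∧
    (!![2 * a, g; g, 2 * b]).det = 4 * m * nsq ∧ 4 * m * nsq > 0 ∧
    (!![2 * a, g, h; g, 2 * b, i; h, i, 2 * c]).det = 16 * nsq ^ 3 ∧ 16 * nsq ^ 3 > 0 ∧
    (!![2 * a, g, h; g, 2 * b, i; h, i, 2 * c]).PosDef := by
  have hne : D₁ ≠ 0 ∨ D₂ ≠ 0 ∨ D₃ ≠ 0 := by tauto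
  have hnsq : 0 < nsq := by
    rcases hne with h' | h' | h' <;> nlinarith [sq_nonneg D₁, sq_nonneg D₂, sq_nonneg D₃, pow_pos (abs_pos.mpr h') 2, sq_abs D₁, sq_abs D₂, sq_abs D₃]
  refine ⟨by nlinarith, ?_, by nlinarith, ?_, by positivity, ?_⟩
  · simp only [Matrix.det_fin_two_of]
    subst ha hb hg hm hn; ring
  · simp only [Matrix.det_fin_three, Matrix.cons_val', Matrix.cons_val_zero,
      Matrix.cons_val_one, Matrix.head_cons, Matrix.empty_val', Matrix.cons_val_fin_one,
      Matrix.head_fin_const, Matrix.of_apply, Matrix.cons_val_two, Matrix.tail_cons]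
    subst ha hb hc hg hh hi hn; ring
  · rw [Matrix.posDef_iff_dotProduct_mulVec]; constructor
    · ext j k
      fin_cases j <;> fin_cases k <;>
        simp [Matrix.conjTranspose_apply]
    · intro x hx
      have hx' : x 0 ≠ 0 ∨ x 1 ≠ 0 ∨ x 2 ≠ 0 := by
        by_contra hc'
        push_neg at hc'
        apply hx
        ext j; fin_cases j <;> simp [hc'.1, hc'.2.1, hc'.2.2]
      simp only [Matrix.mulVec, dotProduct, Fin.sum_univ_three,
        Matrix.cons_val', Matrix.cons_val_zero, Matrix.cons_val_one, Matrix.head_cons,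
        Matrix.empty_val', Matrix.cons_val_fin_one, Matrix.head_fin_const,
        RCLike.inner_apply, conj_trivial, Matrix.of_apply, Matrix.cons_val_two, Matrix.tail_cons,
        Pi.star_apply, star_trivial]
      have key : ∀ u v w : ℝ, (u ≠ 0 ∨ v ≠ 0 ∨ w ≠ 0) →
          0 < u * (2*a*u + g*v + h*w) + v * (g*u + 2*b*v + i*w) + w * (h*u + i*v + 2*c*w) := by
        intro u v w huv
        have hq : u * (2*a*u + g*v + h*w) + v * (g*u + 2*b*v + i*w) + w * (h*u + i*v + 2*c*w)
            = 2 * nsq * (u^2 + v^2 + w^2) + 2 * (D₁*u + D₂*v + D₃*w)^2 := by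
          subst ha hb hc hg hh hi hn; ring
        rw [hq]
        have huvw : 0 < u^2 + v^2 + w^2 := by
          rcases huv with h' | h' | h' <;> nlinarith [sq_nonneg u, sq_nonneg v, sq_nonneg w, pow_pos (abs_pos.mpr h') 2, sq_abs u, sq_abs v, sq_abs w]
        have h1 : 0 < 2 * nsq * (u^2 + v^2 + w^2) := by positivity
        linarith [sq_nonneg (D₁*u + D₂*v + D₃*w)]
      have := key (x 0) (x 1) (x 2) hx'
      exact this
end

section
/- With D, a, b, c, g, h, i as above and k = D₁² + 2D₂² + 2D₃², l = 2D₁² + D₂² + 2D₃², m = 2D₁² + 2D₂² + D₃², the inverse of H = [[2a, g, h], [g, 2b, i], [h, i, 2c]] equals (1/(8‖D‖⁴))·[[2k, −g, −h], [−g, 2l, −i], [−h, −i, 2m]]. Consequently, for any d, e, f ∈ ℝ, the unique solution of H·(s,t,u)ᵀ = (−d,−e,−f)ᵀ is s⁰ = (−2dk + eg + fh)/(8‖D‖⁴), t⁰ = (dg − 2el + fi)/(8‖D‖⁴), u⁰ = (dh + ei − 2fm)/(8‖D‖⁴). -/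
set_option maxHeartbeats 2000000


open Matrix

/-- The explicit inverse of the Hessian `H` and the resulting unique solution
`(s⁰, t⁰, u⁰)` of `H·(s,t,u)ᵀ = (−d,−e,−f)ᵀ`. -/
theorem stmt14 (D₁ D₂ D₃ : ℝ) (hD : ¬(D₁ = 0 ∧ D₂ = 0 ∧ D₃ = 0))
    (a b c g h i k l m nsq : ℝ)
    (ha : a = 2 * D₁ ^ 2 + D₂ ^ 2 + D₃ ^ 2)
    (hb : b = D₁ ^ 2 + 2 * D₂ ^ 2 + D₃ ^ 2)
    (hc : c = D₁ ^ 2 + D₂ ^ 2 + 2 * D₃ ^ 2)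
    (hg : g = 2 * D₁ * D₂) (hh : h = 2 * D₁ * D₃) (hi : i = 2 * D₂ * D₃)
    (hk : k = D₁ ^ 2 + 2 * D₂ ^ 2 + 2 * D₃ ^ 2)
    (hl : l = 2 * D₁ ^ 2 + D₂ ^ 2 + 2 * D₃ ^ 2)
    (hm : m = 2 * D₁ ^ 2 + 2 * D₂ ^ 2 + D₃ ^ 2)
    (hn : nsq = D₁ ^ 2 + D₂ ^ 2 + D₃ ^ 2) :
    (!![2 * a, g, h; g, 2 * b, i; h, i, 2 * c])⁻¹
      = (1 / (8 * nsq ^ 2)) • !![2 * k, -g, -h; -g, 2 * l, -i; -h, -i, 2 * m] ∧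
    ∀ d e f : ℝ,
      (!![2 * a, g, h; g, 2 * b, i; h, i, 2 * c]).mulVec
          ![(-2 * d * k + e * g + f * h) / (8 * nsq ^ 2),
            (d * g - 2 * e * l + f * i) / (8 * nsq ^ 2),
            (d * h + e * i - 2 * f * m) / (8 * nsq ^ 2)] = ![-d, -e, -f] ∧
      ∀ v : Fin 3 → ℝ,
        (!![2 * a, g, h; g, 2 * b, i; h, i, 2 * c]).mulVec v = ![-d, -e, -f] →
          v = ![(-2 * d * k + e * g + f * h) / (8 * nsq ^ 2),
                (d * g - 2 * e * l + f * i) / (8 * nsq ^ 2),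
                (d * h + e * i - 2 * f * m) / (8 * nsq ^ 2)] := by
  subst ha hb hc hg hh hi hk hl hm hn
  have hns : D₁ ^ 2 + D₂ ^ 2 + D₃ ^ 2 ≠ 0 := by
    intro hz
    exact hD ⟨by nlinarith [sq_nonneg D₁, sq_nonneg D₂, sq_nonneg D₃],
      by nlinarith [sq_nonneg D₁, sq_nonneg D₂, sq_nonneg D₃],
      by nlinarith [sq_nonneg D₁, sq_nonneg D₂, sq_nonneg D₃]⟩
  set H : Matrix (Fin 3) (Fin 3) ℝ :=
    !![2 * (2 * D₁ ^ 2 + D₂ ^ 2 + D₃ ^ 2), 2 * D₁ * D₂, 2 * D₁ * D₃;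
       2 * D₁ * D₂, 2 * (D₁ ^ 2 + 2 * D₂ ^ 2 + D₃ ^ 2), 2 * D₂ * D₃;
       2 * D₁ * D₃, 2 * D₂ * D₃, 2 * (D₁ ^ 2 + D₂ ^ 2 + 2 * D₃ ^ 2)] with hH
  set B : Matrix (Fin 3) (Fin 3) ℝ :=
    (1 / (8 * (D₁ ^ 2 + D₂ ^ 2 + D₃ ^ 2) ^ 2)) •
    !![2 * (D₁ ^ 2 + 2 * D₂ ^ 2 + 2 * D₃ ^ 2), -(2 * D₁ * D₂), -(2 * D₁ * D₃);
       -(2 * D₁ * D₂), 2 * (2 * D₁ ^ 2 + D₂ ^ 2 + 2 * D₃ ^ 2), -(2 * D₂ * D₃);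
       -(2 * D₁ * D₃), -(2 * D₂ * D₃), 2 * (2 * D₁ ^ 2 + 2 * D₂ ^ 2 + D₃ ^ 2)] with hB
  have hHB : H * B = 1 := by
    ext x y
    fin_cases x <;> fin_cases y <;>
      simp [hH, hB, Matrix.mul_apply, Fin.sum_univ_succ, Matrix.one_apply] <;>
      field_simp <;> ring
  have hBH : B * H = 1 := by
    ext x y
    fin_cases x <;> fin_cases y <;>
      simp [hH, hB, Matrix.mul_apply, Fin.sum_univ_succ, Matrix.one_apply] <;>
      field_simp <;> ring
  refine ⟨Matrix.inv_eq_right_inv hHB, fun d e f => ⟨?_, fun v hv => ?_⟩⟩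
  · funext x
    fin_cases x <;>
      simp [hH, Matrix.mulVec, dotProduct, Fin.sum_univ_succ] <;>
      field_simp <;> ring
  · have : v = B.mulVec (H.mulVec v) := by
      rw [Matrix.mulVec_mulVec, hBH, Matrix.one_mulVec]
    rw [this, hv]
    funext x
    fin_cases x <;>
      simp [hB, Matrix.mulVec, dotProduct, Fin.sum_univ_succ] <;>
      field_simp <;> ring
end
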